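/- arXiv:1602.04698 — 3 statements merged into one kernel-verified Lean document; each statement's English description precedes it below -/
import Mathlib

section
/- Let G be a simple graph and let S be a clique (a set of pairwise adjacent vertices) in the total graph T(G). If S contains at least two distinct vertex vertices and at least one edge vertex, then S has cardinality at most 3; moreover, any edge vertex in S must be the edge of G joining the two vertex vertices of S (in particular S contains exactly two vertex vertices and exactly one edge vertex). -/
/-- The total graph of a simple graph `G`: its vertices are `V ⊕ G.edgeSet`
(vertex vertices and edge vertices); two distinct vertices are adjacent exactly when
the corresponding elements of `G` are adjacent vertices, edges sharing an endpoint,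
or an incident vertex–edge pair. -/
def totalGraph {V : Type*} (G : SimpleGraph V) : SimpleGraph (V ⊕ G.edgeSet) where
  Adj x y :=
    match x, y with
    | Sum.inl u, Sum.inl w => G.Adj u w
    | Sum.inl u, Sum.inr e => u ∈ (e : Sym2 V)
    | Sum.inr e, Sum.inl u => u ∈ (e : Sym2 V)
    | Sum.inr e, Sum.inr f => e ≠ f ∧ ∃ u, u ∈ (e : Sym2 V) ∧ u ∈ (f : Sym2 V)
  symm := by
    constructor
    rintro (u | e) (w | f) h
    · exact h.symm
    · exact h
    · exact h
    · exact ⟨h.1.symm, h.2.imp fun u hu => ⟨hu.2, hu.1⟩⟩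
  loopless := by
    constructor
    rintro (u | e) h
    · exact G.loopless.irrefl u h
    · exact h.1 rfl

/-- A mixed clique in `T(G)` containing at least two vertex vertices has size at most 3,
every edge vertex in it is the edge joining those two vertex vertices, and it contains
no vertex vertex other than those two. -/
theorem stmt_0 {V : Type*} (G : SimpleGraph V) (S : Set (V ⊕ G.edgeSet))
    (hS : (totalGraph G).IsClique S) (u v : V) (huv : u ≠ v)
    (hu : Sum.inl u ∈ S) (hv : Sum.inl v ∈ S)
    (e : G.edgeSet) (he : Sum.inr e ∈ S) :
    S.ncard ≤ 3 ∧
      (∀ f : G.edgeSet, Sum.inr f ∈ S → (f : Sym2 V) = s(u, v)) ∧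
      (∀ w : V, Sum.inl w ∈ S → w = u ∨ w = v) := by
  have hedge : ∀ f : G.edgeSet, Sum.inr f ∈ S → (f : Sym2 V) = s(u, v) := by
    intro f hf
    have h1 : u ∈ (f : Sym2 V) := hS hu hf (by simp)
    have h2 : v ∈ (f : Sym2 V) := hS hv hf (by simp)
    exact (Sym2.mem_and_mem_iff huv).mp ⟨h1, h2⟩
  have he' : (e : Sym2 V) = s(u, v) := hedge e he
  have hvert : ∀ w : V, Sum.inl w ∈ S → w = u ∨ w = v := by
    intro w hw
    have h : w ∈ (e : Sym2 V) := hS hw he (by simp)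
    rw [he'] at h
    simpa using h
  refine ⟨?_, hedge, hvert⟩
  have hsub : S ⊆ {Sum.inl u, Sum.inl v, Sum.inr e} := by
    rintro (w | f) hx
    · rcases hvert w hx with rfl | rfl
      · exact Set.mem_insert _ _
      · exact Set.mem_insert_of_mem _ (Set.mem_insert _ _)
    · have : (f : Sym2 V) = (e : Sym2 V) := (hedge f hx).trans he'.symm
      have : f = e := Subtype.ext this
      subst this
      exact Set.mem_insert_of_mem _ (Set.mem_insert_of_mem _ rfl)
  calc S.ncard ≤ ({Sum.inl u, Sum.inl v, Sum.inr e} : Set (V ⊕ G.edgeSet)).ncard :=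
        Set.ncard_le_ncard hsub (Set.toFinite _)
    _ ≤ 3 := by
        apply le_trans (Set.ncard_insert_le _ _)
        apply Nat.succ_le_succ
        apply le_trans (Set.ncard_insert_le _ _)
        simp
end

section
/- For every natural number n ≥ 2, the line graph of the complete graph K_n is isomorphic to the total graph of the complete graph K_{n−1}; that is, L(K_n) ≅ T(K_{n−1}). -/
namespace TotalAux

open SimpleGraph

variable {m : ℕ}

/-- The backward map: vertex vertices go to edges through the last vertex,
edge vertices go to edges avoiding the last vertex. -/
def g (m : ℕ) :
    Fin m ⊕ ((⊤ : SimpleGraph (Fin m)).edgeSet) → ((⊤ : SimpleGraph (Fin (m+1))).edgeSet)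
  | Sum.inl u => ⟨s(u.castSucc, Fin.last m), by
      rw [SimpleGraph.mem_edgeSet, top_adj]
      exact (Fin.castSucc_lt_last u).ne⟩
  | Sum.inr e => ⟨(e : Sym2 (Fin m)).map Fin.castSucc, by
      have he : ¬ (e : Sym2 (Fin m)).IsDiag := SimpleGraph.not_isDiag_of_mem_edgeSet _ e.2
      rw [SimpleGraph.edgeSet_top]
      exact fun h => he ((Sym2.isDiag_map (Fin.castSucc_injective m)).mp h)⟩

lemma last_not_mem_map (e : Sym2 (Fin m)) : Fin.last m ∉ e.map Fin.castSucc := by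
  rw [Sym2.mem_map]
  rintro ⟨a, -, ha⟩
  exact (Fin.castSucc_lt_last a).ne ha

lemma castSucc_mem_map {u : Fin m} {e : Sym2 (Fin m)} :
    u.castSucc ∈ e.map Fin.castSucc ↔ u ∈ e := by
  rw [Sym2.mem_map]
  constructor
  · rintro ⟨a, ha, h⟩
    rwa [Fin.castSucc_injective m h] at ha
  · exact fun h => ⟨u, h, rfl⟩

lemma g_injective : Function.Injective (g m) := by
  rintro (u | e) (w | f) h
  all_goals have h' := congrArg Subtype.val h
  all_goals simp only [g] at h'
  · rw [Sym2.eq_iff] at h'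
    rcases h' with ⟨h1, -⟩ | ⟨h1, -⟩
    · exact congrArg Sum.inl (Fin.castSucc_injective m h1)
    · exact absurd h1 (Fin.castSucc_lt_last u).ne
  · exact absurd (h' ▸ (by simp : Fin.last m ∈ s(u.castSucc, Fin.last m)))
      (last_not_mem_map _)
  · exact absurd (h'.symm ▸ (by simp : Fin.last m ∈ s(w.castSucc, Fin.last m)))
      (last_not_mem_map _)
  · exact congrArg Sum.inr (Subtype.ext
      (Sym2.map.injective (Fin.castSucc_injective m) h'))

lemma g_surjective : Function.Surjective (g m) := by
  rintro ⟨e, he⟩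
  induction e using Sym2.ind with
  | _ a b =>
    rw [SimpleGraph.mem_edgeSet, top_adj] at he
    by_cases ha : a = Fin.last m
    · subst ha
      obtain ⟨b', rfl⟩ := Fin.eq_castSucc_of_ne_last (Ne.symm he)
      exact ⟨Sum.inl b', Subtype.ext (Sym2.eq_swap)⟩
    · obtain ⟨a', rfl⟩ := Fin.eq_castSucc_of_ne_last ha
      by_cases hb : b = Fin.last m
      · subst hb
        exact ⟨Sum.inl a', rfl⟩
      · obtain ⟨b', rfl⟩ := Fin.eq_castSucc_of_ne_last hb
        refine ⟨Sum.inr ⟨s(a', b'), ?_⟩, Subtype.ext ?_⟩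
        · rw [SimpleGraph.mem_edgeSet, top_adj]
          exact fun h => he (congrArg Fin.castSucc h)
        · simp [g, Sym2.map_pair_eq]

lemma g_adj (a b : Fin m ⊕ ((⊤ : SimpleGraph (Fin m)).edgeSet)) :
    (⊤ : SimpleGraph (Fin (m+1))).lineGraph.Adj (g m a) (g m b) ↔
      (totalGraph (⊤ : SimpleGraph (Fin m))).Adj a b := by
  rw [SimpleGraph.lineGraph_adj_iff_exists]
  rcases a with u | e <;> rcases b with w | f
  · show _ ↔ (⊤ : SimpleGraph (Fin m)).Adj u w
    rw [top_adj]
    constructor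
    · rintro ⟨hne, -⟩ rfl
      exact hne rfl
    · intro huw
      refine ⟨fun h => ?_, Fin.last m, by simp [g], by simp [g]⟩
      have h' : (s(u.castSucc, Fin.last m) : Sym2 (Fin (m+1))) = s(w.castSucc, Fin.last m) :=
        congrArg Subtype.val h
      rw [Sym2.eq_iff] at h'
      rcases h' with ⟨h1, -⟩ | ⟨h1, -⟩
      · exact huw (Fin.castSucc_injective m h1)
      · exact (Fin.castSucc_lt_last u).ne h1
  · show _ ↔ u ∈ (f : Sym2 (Fin m))
    constructor
    · rintro ⟨-, v, hv1, hv2⟩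
      simp only [g] at hv1 hv2
      rw [Sym2.mem_iff] at hv1
      rcases hv1 with rfl | rfl
      · exact castSucc_mem_map.mp hv2
      · exact absurd hv2 (last_not_mem_map _)
    · intro hu
      refine ⟨fun h => ?_, u.castSucc, by simp [g], castSucc_mem_map.mpr hu⟩
      have h' := congrArg Subtype.val h
      simp only [g] at h'
      exact absurd (h' ▸ (by simp : Fin.last m ∈ s(u.castSucc, Fin.last m)))
        (last_not_mem_map _)
  · show _ ↔ w ∈ (e : Sym2 (Fin m))
    constructor
    · rintro ⟨-, v, hv1, hv2⟩
      simp only [g] at hv1 hv2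
      rw [Sym2.mem_iff] at hv2
      rcases hv2 with rfl | rfl
      · exact castSucc_mem_map.mp hv1
      · exact absurd hv1 (last_not_mem_map _)
    · intro hw
      refine ⟨fun h => ?_, w.castSucc, castSucc_mem_map.mpr hw, by simp [g]⟩
      have h' := congrArg Subtype.val h
      simp only [g] at h'
      exact absurd (h'.symm ▸ (by simp : Fin.last m ∈ s(w.castSucc, Fin.last m)))
        (last_not_mem_map _)
  · show _ ↔ e ≠ f ∧ ∃ u, u ∈ (e : Sym2 (Fin m)) ∧ u ∈ (f : Sym2 (Fin m))
    constructor
    · rintro ⟨hne, v, hv1, hv2⟩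
      simp only [g] at hv1 hv2
      obtain ⟨a, ha, rfl⟩ := Sym2.mem_map.mp hv1
      refine ⟨fun h => hne (by rw [h]), a, ha, castSucc_mem_map.mp hv2⟩
    · rintro ⟨hne, v, hv1, hv2⟩
      refine ⟨fun h => hne ?_, v.castSucc, castSucc_mem_map.mpr hv1, castSucc_mem_map.mpr hv2⟩
      have h' : (e : Sym2 (Fin m)).map Fin.castSucc = (f : Sym2 (Fin m)).map Fin.castSucc :=
        congrArg Subtype.val h
      exact Subtype.ext (Sym2.map.injective (Fin.castSucc_injective m) h')

/-- The isomorphism from the total graph of `K m` to the line graph of `K (m+1)`. -/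
noncomputable def iso (m : ℕ) :
    (totalGraph (⊤ : SimpleGraph (Fin m))) ≃g (⊤ : SimpleGraph (Fin (m+1))).lineGraph :=
  { Equiv.ofBijective (g m) ⟨g_injective, g_surjective⟩ with
    map_rel_iff' := fun {a b} => g_adj a b }

end TotalAux

/-- For `n ≥ 2`, the line graph of `K n` is isomorphic to the total graph of `K (n-1)`. -/
theorem stmt_11 (n : ℕ) (hn : 2 ≤ n) :
    Nonempty ((⊤ : SimpleGraph (Fin n)).lineGraph ≃g
      totalGraph (⊤ : SimpleGraph (Fin (n - 1)))) := by
  obtain ⟨m, rfl⟩ : ∃ m, n = m + 1 := ⟨n - 1, (Nat.succ_pred_eq_of_pos (by omega)).symm⟩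
  exact ⟨(TotalAux.iso m).symm⟩
end

section
/- Let G be a simple graph with finite vertex degrees and let e be an edge of G with endpoints u and v. Set A = {u} ∪ {edge vertices of edges of G incident to u other than e} and B = {v} ∪ {edge vertices of edges of G incident to v other than e}. Then A and B are disjoint cliques in the total graph T(G), of cardinalities deg_G(u) and deg_G(v) respectively, and the neighbourhood of the edge vertex e in T(G) is exactly A ∪ B. -/
lemma aux_clique {V : Type*} (G : SimpleGraph V) (e : G.edgeSet) (u : V) :
    (totalGraph G).IsClique
      ({Sum.inl u} ∪ Sum.inr '' {f : G.edgeSet | u ∈ (f : Sym2 V) ∧ f ≠ e}) := by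
  rintro x (rfl | ⟨f, ⟨hf, _⟩, rfl⟩) y (rfl | ⟨g, ⟨hg, _⟩, rfl⟩) hxy
  · exact absurd rfl hxy
  · exact hg
  · exact hf
  · exact ⟨fun h => hxy (by rw [h]), u, hf, hg⟩

lemma aux_card {V : Type*} (G : SimpleGraph V) [G.LocallyFinite]
    (e : G.edgeSet) (u : V) (hu : u ∈ (e : Sym2 V)) (hd : 1 ≤ G.degree u) :
    ({Sum.inl u} ∪ Sum.inr '' {f : G.edgeSet | u ∈ (f : Sym2 V) ∧ f ≠ e} :
      Set (V ⊕ G.edgeSet)).ncard = G.degree u := by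
  classical
  set S : Set G.edgeSet := {f : G.edgeSet | u ∈ (f : Sym2 V) ∧ f ≠ e} with hSdef
  have hval : Subtype.val '' S = G.incidenceSet u \ {(e : Sym2 V)} := by
    ext w
    constructor
    · rintro ⟨f, ⟨hf, hne⟩, rfl⟩
      exact ⟨⟨f.2, hf⟩, fun h => hne (Subtype.ext h)⟩
    · rintro ⟨⟨hw, hwu⟩, hne⟩
      exact ⟨⟨w, hw⟩, ⟨hwu, fun h => hne (congrArg Subtype.val h)⟩, rfl⟩
  have hincfin : (G.incidenceSet u).Finite := Set.toFinite _
  have hinc : (G.incidenceSet u).ncard = G.degree u := by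
    rw [Set.ncard_eq_toFinset_card', Set.toFinset_card, G.card_incidenceSet_eq_degree]
  have hSval : (Subtype.val '' S).ncard = G.degree u - 1 := by
    rw [hval, Set.ncard_diff_singleton_of_mem (show (e : Sym2 V) ∈ G.incidenceSet u from ⟨e.2, hu⟩), hinc]
  have hSfin : S.Finite :=
    Set.Finite.of_finite_image (hval ▸ hincfin.diff (t := {(e : Sym2 V)})) Subtype.val_injective.injOn
  have hScard : S.ncard = G.degree u - 1 := by
    rw [← hSval, Set.ncard_image_of_injective _ Subtype.val_injective]
  have hnotmem : (Sum.inl u : V ⊕ G.edgeSet) ∉ Sum.inr '' S := by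
    rintro ⟨f, _, h⟩; exact Sum.inl_ne_inr h.symm
  rw [Set.singleton_union, Set.ncard_insert_of_notMem hnotmem (hSfin.image _),
    Set.ncard_image_of_injective _ Sum.inr_injective, hScard]
  omega
/-- For an edge `e = uv` of `G`, the sets `A = {u} ∪ {edges ≠ e incident to u}` and
`B = {v} ∪ {edges ≠ e incident to v}` are disjoint cliques in `T(G)` of sizes
`deg u` and `deg v`, and the neighbourhood of the edge vertex `e` is exactly `A ∪ B`. -/
theorem stmt_15 {V : Type*} (G : SimpleGraph V) [G.LocallyFinite]
    (e : G.edgeSet) (u v : V) (he : (e : Sym2 V) = s(u, v)) :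
    Disjoint
        ({Sum.inl u} ∪ Sum.inr '' {f : G.edgeSet | u ∈ (f : Sym2 V) ∧ f ≠ e} :
          Set (V ⊕ G.edgeSet))
        ({Sum.inl v} ∪ Sum.inr '' {f : G.edgeSet | v ∈ (f : Sym2 V) ∧ f ≠ e}) ∧
      (totalGraph G).IsClique
        ({Sum.inl u} ∪ Sum.inr '' {f : G.edgeSet | u ∈ (f : Sym2 V) ∧ f ≠ e}) ∧
      (totalGraph G).IsClique
        ({Sum.inl v} ∪ Sum.inr '' {f : G.edgeSet | v ∈ (f : Sym2 V) ∧ f ≠ e}) ∧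
      ({Sum.inl u} ∪ Sum.inr '' {f : G.edgeSet | u ∈ (f : Sym2 V) ∧ f ≠ e} :
          Set (V ⊕ G.edgeSet)).ncard = G.degree u ∧
      ({Sum.inl v} ∪ Sum.inr '' {f : G.edgeSet | v ∈ (f : Sym2 V) ∧ f ≠ e} :
          Set (V ⊕ G.edgeSet)).ncard = G.degree v ∧
      (totalGraph G).neighborSet (Sum.inr e) =
        ({Sum.inl u} ∪ Sum.inr '' {f : G.edgeSet | u ∈ (f : Sym2 V) ∧ f ≠ e}) ∪
          ({Sum.inl v} ∪ Sum.inr '' {f : G.edgeSet | v ∈ (f : Sym2 V) ∧ f ≠ e}) := by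
  have hadj : G.Adj u v := by have h := e.2; rwa [he, G.mem_edgeSet] at h
  have hne : u ≠ v := hadj.ne
  have hu : u ∈ (e : Sym2 V) := by rw [he]; exact Sym2.mem_mk_left u v
  have hv : v ∈ (e : Sym2 V) := by rw [he]; exact Sym2.mem_mk_right u v
  have key : ∀ f : G.edgeSet, u ∈ (f : Sym2 V) → v ∈ (f : Sym2 V) → f = e := by
    intro f hfu hfv
    exact Subtype.ext (((Sym2.mem_and_mem_iff hne).mp ⟨hfu, hfv⟩).trans he.symm)
  refine ⟨?_, aux_clique G e u, aux_clique G e v,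
    aux_card G e u hu ((G.degree_pos_iff_exists_adj u).2 ⟨v, hadj⟩),
    aux_card G e v hv ((G.degree_pos_iff_exists_adj v).2 ⟨u, hadj.symm⟩), ?_⟩
  · rw [Set.disjoint_left]
    rintro x (rfl | ⟨f, ⟨hf, hfe⟩, rfl⟩) hx
    · rcases hx with h | ⟨g, _, hg⟩
      · exact hne (Sum.inl_injective h)
      · exact Sum.inl_ne_inr hg.symm
    · rcases hx with h | ⟨g, ⟨hg, hge⟩, hgf⟩
      · exact Sum.inr_ne_inl h
      · exact hfe (key f hf (Sum.inr_injective hgf ▸ hg))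
  · ext x
    cases x with
    | inl w =>
      simp only [SimpleGraph.mem_neighborSet, Set.mem_union, Set.mem_singleton_iff,
        Set.mem_image, Set.mem_setOf_eq]
      show w ∈ (e : Sym2 V) ↔ _
      rw [he, Sym2.mem_iff]
      constructor
      · rintro (rfl | rfl)
        · exact Or.inl (Or.inl rfl)
        · exact Or.inr (Or.inl rfl)
      · rintro ((h | ⟨g, _, hg⟩) | (h | ⟨g, _, hg⟩))
        · exact Or.inl (Sum.inl_injective h)
        · exact absurd hg (Sum.inr_ne_inl)
        · exact Or.inr (Sum.inl_injective h)
        · exact absurd hg (Sum.inr_ne_inl)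
    | inr f =>
      simp only [SimpleGraph.mem_neighborSet, Set.mem_union, Set.mem_singleton_iff,
        Set.mem_image, Set.mem_setOf_eq]
      show (e ≠ f ∧ ∃ w, w ∈ (e : Sym2 V) ∧ w ∈ (f : Sym2 V)) ↔ _
      constructor
      · rintro ⟨hef, w, hwe, hwf⟩
        rw [he, Sym2.mem_iff] at hwe
        rcases hwe with rfl | rfl
        · exact Or.inl (Or.inr ⟨f, ⟨hwf, fun h => hef h.symm⟩, rfl⟩)
        · exact Or.inr (Or.inr ⟨f, ⟨hwf, fun h => hef h.symm⟩, rfl⟩)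
      · rintro ((h | ⟨g, ⟨hg, hge⟩, hgf⟩) | (h | ⟨g, ⟨hg, hge⟩, hgf⟩))
        · exact absurd h Sum.inr_ne_inl
        · exact ⟨fun h => hge ((Sum.inr_injective hgf) ▸ h.symm), u,
            hu, Sum.inr_injective hgf ▸ hg⟩
        · exact absurd h Sum.inr_ne_inl
        · exact ⟨fun h => hge ((Sum.inr_injective hgf) ▸ h.symm), v,
            hv, Sum.inr_injective hgf ▸ hg⟩
end
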